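/- Let F be a field of characteristic not 2 or 3 and let k ∈ F be nonzero. Consider the elliptic curve E_k : y² = x³ + k in Weierstrass form over F, and let P be the point of E_k with affine coordinates (x, y), where x, y ∈ F satisfy y² = x³ + k. Then 3·P = 0 in the group of points of E_k if and only if x = 0, or x³ = −4k and y² = −3k. (Thus the nontrivial 3-torsion points of E_k are the two points (0, ±√k), which form the kernel of the 3-isogeny φ, together with the six points (x, y) with x³ = −4k and y² = −3k.) -/

import Mathlib

/-!
STATEMENT 15: Let F be a field of characteristic not 2 or 3 and k ∈ F nonzero.  On the
elliptic curve E_k : y² = x³ + k, a point P with affine coordinates (x,y) satisfies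
3·P = 0 if and only if x = 0, or x³ = −4k and y² = −3k.
-/

/-- The Weierstrass curve `E_k : y² = x³ + k` (in affine form). -/
def Ek (F : Type*) [Field F] (k : F) : WeierstrassCurve.Affine F :=
  { a₁ := 0, a₂ := 0, a₃ := 0, a₄ := 0, a₆ := k }

lemma some_eq_some_iff' {F : Type*} [Field F] {W : WeierstrassCurve.Affine F}
    {x₁ y₁ x₂ y₂ : F} (h₁ : W.Nonsingular x₁ y₁) (h₂ : W.Nonsingular x₂ y₂) :
    WeierstrassCurve.Affine.Point.some x₁ y₁ h₁ = WeierstrassCurve.Affine.Point.some x₂ y₂ h₂ ↔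
      x₁ = x₂ ∧ y₁ = y₂ := by
  constructor
  · intro h
    injection h with h h'
    exact ⟨h, h'⟩
  · rintro ⟨rfl, rfl⟩
    rfl

open Classical in
theorem three_torsion_Ek {F : Type*} [Field F]
    (h2 : (2 : F) ≠ 0) (h3 : (3 : F) ≠ 0) (k : F) (hk : k ≠ 0)
    (x y : F) (hns : (Ek F k).Nonsingular x y) :
    3 • WeierstrassCurve.Affine.Point.some x y hns = 0 ↔
      x = 0 ∨ (x ^ 3 = -4 * k ∧ y ^ 2 = -3 * k) := by
  have heq : y ^ 2 = x ^ 3 + k := by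
    have h := hns.left
    rw [WeierstrassCurve.Affine.equation_iff] at h
    simpa [Ek] using h
  have hnegY : (Ek F k).negY x y = -y := by
    simp [Ek, WeierstrassCurve.Affine.negY]
  have h3P : 3 • WeierstrassCurve.Affine.Point.some x y hns =
      (WeierstrassCurve.Affine.Point.some x y hns + WeierstrassCurve.Affine.Point.some x y hns) +
        WeierstrassCurve.Affine.Point.some x y hns := by
    rw [show (3 : ℕ) = 2 + 1 from rfl, succ_nsmul, two_nsmul]
  by_cases hy : y = 0
  · have hY : y = (Ek F k).negY x y := by rw [hnegY, hy, neg_zero]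
    rw [h3P, WeierstrassCurve.Affine.Point.add_self_of_Y_eq hY, zero_add]
    constructor
    · exact fun h => absurd h (WeierstrassCurve.Affine.Point.some_ne_zero hns)
    · rintro (hx | ⟨hx3, hy2⟩)
      · exfalso; apply hk
        rw [hy, hx] at heq
        simpa using heq.symm
      · exfalso; apply hk
        have h0 : (0 : F) = -3 * k := by rw [← hy2, hy]; ring
        have : (-3 : F) * k = 0 := h0.symm
        rcases mul_eq_zero.mp this with h | h
        · exact absurd (neg_eq_zero.mp h) h3
        · exact h
  · have hY : y ≠ (Ek F k).negY x y := by
      rw [hnegY]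
      intro h
      apply hy
      have h2y : 2 * y = 0 := by linear_combination h
      exact (mul_eq_zero.mp h2y).resolve_left h2
    have h2y : (2 : F) * y ≠ 0 := mul_ne_zero h2 hy
    have hL : (Ek F k).slope x x y y = 3 * x ^ 2 / (2 * y) := by
      rw [WeierstrassCurve.Affine.slope_of_Y_ne rfl hY, hnegY]
      simp [Ek]
      ring_nf
    have hx3 : (Ek F k).addX x x ((Ek F k).slope x x y y) =
        (3 * x ^ 2 / (2 * y)) ^ 2 - 2 * x := by
      rw [hL]; simp [Ek, WeierstrassCurve.Affine.addX]; ring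
    have key : (3 * x ^ 2 / (2 * y)) ^ 2 - 2 * x = x ↔
        x = 0 ∨ (x ^ 3 = -4 * k ∧ y ^ 2 = -3 * k) := by
      constructor
      · intro h
        have h9 : (3 * x ^ 2) ^ 2 = 3 * x * (2 * y) ^ 2 := by
          have h' : (3 * x ^ 2) ^ 2 / (2 * y) ^ 2 = 3 * x := by
            rw [← div_pow]; linear_combination h
          field_simp at h'
          linear_combination 3 * h'
        have hfac : (3 * x) * (x ^ 3 + 4 * k) = 0 := by
          linear_combination -h9 - 12 * x * heq
        rcases mul_eq_zero.mp hfac with h0 | h0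
        · left
          exact (mul_eq_zero.mp h0).resolve_left h3
        · right
          have hx3' : x ^ 3 = -4 * k := by linear_combination h0
          exact ⟨hx3', by linear_combination heq + hx3'⟩
      · rintro (rfl | ⟨hx3', hy2⟩)
        · simp
        · have h9 : (3 * x ^ 2) ^ 2 = 3 * x * (2 * y) ^ 2 := by
            linear_combination 9 * x * hx3' - 12 * x * hy2
          have : (3 * x ^ 2 / (2 * y)) ^ 2 = 3 * x := by
            rw [div_pow, div_eq_iff (pow_ne_zero 2 h2y)]
            linear_combination h9
          rw [this]; ring
    rw [h3P, WeierstrassCurve.Affine.Point.add_self_of_Y_ne hY, add_eq_zero_iff_eq_neg,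
      WeierstrassCurve.Affine.Point.neg_some, some_eq_some_iff']
    constructor
    · rintro ⟨hxx, -⟩
      exact key.mp (by rw [← hx3]; exact hxx)
    · intro h
      have hxx : (Ek F k).addX x x ((Ek F k).slope x x y y) = x := by
        rw [hx3]; exact key.mpr h
      refine ⟨hxx, ?_⟩
      rw [hnegY]
      show (Ek F k).addY x x y ((Ek F k).slope x x y y) = -y
      rw [WeierstrassCurve.Affine.addY, WeierstrassCurve.Affine.negAddY, hxx]
      simp [Ek, WeierstrassCurve.Affine.negY]
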